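/- Let K be an uncountable algebraically closed field and A an algebraic variety over K (or more generally a K-variety viewed via its K-points). If (T_n)_{n ∈ ℕ} is a decreasing sequence of constructible subsets of A with ⋂_{n ∈ ℕ} T_n = ∅, then T_N = ∅ for some N ∈ ℕ. Equivalently, if (Z_n)_{n ∈ ℕ} is an increasing sequence of constructible subsets with ⋃_n Z_n = A, then Z_N = A for some N. -/

import Mathlib

set_option maxHeartbeats 1000000
set_option synthInstance.maxHeartbeats 400000

/-- The Zariski topology on affine `n`-space over a field `K`: closed sets are
the zero loci of ideals of polynomials. -/
instance zariskiAffine (K : Type*) [Field K] (n : ℕ) : TopologicalSpace (Fin n → K) :=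
  TopologicalSpace.generateFrom
    {U | ∃ I : Ideal (MvPolynomial (Fin n) K), U = (MvPolynomial.zeroLocus K I)ᶜ}

/-- A subset is constructible if it is a finite union of locally closed subsets. -/
def IsConstructibleSet {X : Type*} [TopologicalSpace X] (s : Set X) : Prop :=
  ∃ (m : ℕ) (f : Fin m → Set X), (∀ i, IsLocallyClosed (f i)) ∧ s = ⋃ i, f i

/- ### Auxiliary material -/

open MvPolynomial

universe u

namespace ConstructibleChainAux

/-! #### Generalities on constructible sets -/

section TopGen

variable {X : Type*} [TopologicalSpace X] {s t : Set X}

lemma iUnion_constructible {ι : Type*} [Finite ι] (f : ι → Set X)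
    (h : ∀ i, IsLocallyClosed (f i)) : IsConstructibleSet (⋃ i, f i) := by
  obtain ⟨m, ⟨e⟩⟩ := Finite.exists_equiv_fin ι
  exact ⟨m, f ∘ e.symm, fun i => h _, (e.symm.surjective.iUnion_comp f).symm⟩

lemma constructible_empty : IsConstructibleSet (∅ : Set X) :=
  ⟨0, Fin.elim0, fun i => i.elim0, by simp⟩

lemma constructible_of_locallyClosed (h : IsLocallyClosed s) : IsConstructibleSet s :=
  ⟨1, fun _ => s, fun _ => h, (Set.iUnion_const s).symm⟩

lemma constructible_univ : IsConstructibleSet (Set.univ : Set X) :=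
  constructible_of_locallyClosed isOpen_univ.isLocallyClosed

lemma constructible_union (hs : IsConstructibleSet s) (ht : IsConstructibleSet t) :
    IsConstructibleSet (s ∪ t) := by
  obtain ⟨m1, f1, h1, rfl⟩ := hs
  obtain ⟨m2, f2, h2, rfl⟩ := ht
  have : (⋃ i, f1 i) ∪ (⋃ i, f2 i) = ⋃ x : Fin m1 ⊕ Fin m2, Sum.elim f1 f2 x := by
    rw [Set.iUnion_sum]; rfl
  rw [this]
  exact iUnion_constructible _ (by rintro (i | i) <;> [exact h1 i; exact h2 i])

lemma constructible_inter (hs : IsConstructibleSet s) (ht : IsConstructibleSet t) :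
    IsConstructibleSet (s ∩ t) := by
  obtain ⟨m1, f1, h1, rfl⟩ := hs
  obtain ⟨m2, f2, h2, rfl⟩ := ht
  have : (⋃ i, f1 i) ∩ (⋃ i, f2 i) = ⋃ p : Fin m1 × Fin m2, f1 p.1 ∩ f2 p.2 := by
    ext x
    simp only [Set.mem_inter_iff, Set.mem_iUnion]
    constructor
    · rintro ⟨⟨i, hi⟩, ⟨j, hj⟩⟩; exact ⟨⟨i, j⟩, hi, hj⟩
    · rintro ⟨⟨i, j⟩, hi, hj⟩; exact ⟨⟨i, hi⟩, ⟨j, hj⟩⟩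
  rw [this]
  exact iUnion_constructible _ fun p => (h1 p.1).inter (h2 p.2)

lemma compl_constructible_of_locallyClosed (h : IsLocallyClosed s) :
    IsConstructibleSet sᶜ := by
  obtain ⟨U, Z, hU, hZ, rfl⟩ := h
  rw [Set.compl_inter]
  exact constructible_union
    (constructible_of_locallyClosed hU.isClosed_compl.isLocallyClosed)
    (constructible_of_locallyClosed hZ.isOpen_compl.isLocallyClosed)

lemma compl_iUnion_constructible : ∀ (m : ℕ) (f : Fin m → Set X),
    (∀ i, IsLocallyClosed (f i)) → IsConstructibleSet (⋃ i, f i)ᶜ := by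
  intro m
  induction m with
  | zero => intro f hf; simpa using constructible_univ
  | succ m ih =>
    intro f hf
    have hsplit : (⋃ i, f i) = (⋃ i : Fin m, f i.castSucc) ∪ f (Fin.last m) := by
      ext x
      simp only [Set.mem_iUnion, Set.mem_union]
      constructor
      · rintro ⟨i, hi⟩
        rcases Fin.eq_castSucc_or_eq_last i with ⟨j, rfl⟩ | rfl
        · exact Or.inl ⟨j, hi⟩
        · exact Or.inr hi
      · rintro (⟨i, hi⟩ | hlast)
        · exact ⟨i.castSucc, hi⟩
        · exact ⟨Fin.last m, hlast⟩
    rw [hsplit, Set.compl_union]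
    exact constructible_inter (ih _ fun i => hf i.castSucc)
      (compl_constructible_of_locallyClosed (hf (Fin.last m)))

lemma constructible_compl (hs : IsConstructibleSet s) : IsConstructibleSet sᶜ := by
  obtain ⟨m, f, hf, rfl⟩ := hs
  exact compl_iUnion_constructible m f hf

end TopGen

/-! #### Fields: small-rank extensions are algebraic -/

/-- A field extension of countable rank over an uncountable field is algebraic. -/
lemma alg_of_small_rank {K L : Type u} [Field K] [Field L] [Algebra K L] [Uncountable K]
    (h : Module.rank K L ≤ Cardinal.aleph0) : Algebra.IsAlgebraic K L := by
  constructor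
  intro x
  by_contra hx
  have ht : Transcendental K x := hx
  have h1 := ht.linearIndependent_sub_inv.cardinal_le_rank
  have h2 : Cardinal.aleph0 < Cardinal.mk K := Cardinal.aleph0_lt_mk (α := K)
  exact absurd ((h1.trans h).trans_lt h2) (lt_irrefl _)

/-! #### The key algebraic input -/

/-- Over an uncountable algebraically closed field, given a prime ideal `P` of the
polynomial ring and countably many polynomials not in `P`, there is a common zero of `P`
where all the given polynomials are nonvanishing. -/
lemma key_point (K : Type u) [Field K] [IsAlgClosed K] [Uncountable K] (n : ℕ)
    (P : Ideal (MvPolynomial (Fin n) K)) (hP : P.IsPrime)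
    (g : ℕ → MvPolynomial (Fin n) K) (hg : ∀ m, g m ∉ P) :
    ∃ q ∈ MvPolynomial.zeroLocus K P, ∀ m, MvPolynomial.eval q (g m) ≠ 0 := by
  classical
  haveI := hP
  let R := MvPolynomial (Fin n) K ⧸ P
  let mk : MvPolynomial (Fin n) K →ₐ[K] R := Ideal.Quotient.mkₐ K P
  haveI : IsDomain R := Ideal.Quotient.isDomain P
  let S : Submonoid R := Submonoid.closure (Set.range fun m => mk (g m))
  have hSne : ∀ x ∈ S, x ≠ 0 := by
    intro x hx
    induction hx using Submonoid.closure_induction with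
    | mem y hy =>
      obtain ⟨m, rfl⟩ := hy
      exact fun h0 => hg m (Ideal.Quotient.eq_zero_iff_mem.mp h0)
    | one => exact one_ne_zero
    | mul a b _ _ ha hb => exact mul_ne_zero ha hb
  have hS0 : S ≤ nonZeroDivisors R := fun x hx => mem_nonZeroDivisors_of_ne_zero (hSne x hx)
  let A := Localization S
  haveI : IsDomain A := IsLocalization.isDomain_localization hS0
  -- countability of S
  have hlist : ∀ l : List R, (∀ y ∈ l, y ∈ Set.range fun m => mk (g m)) →
      l.prod ∈ Set.range (fun l : List ℕ => (l.map fun m => mk (g m)).prod) := by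
    intro l
    induction l with
    | nil => exact fun _ => ⟨[], rfl⟩
    | cons a l ih =>
      intro hl
      obtain ⟨m, hm⟩ := hl a List.mem_cons_self
      obtain ⟨l', hl'⟩ := ih fun y hy => hl y (List.mem_cons_of_mem a hy)
      exact ⟨m :: l', by simp [← hl', hm]⟩
  have hScount : Set.Countable (S : Set R) := by
    refine Set.Countable.mono (fun x hx => ?_) (Set.countable_range
      (fun l : List ℕ => (l.map fun m => mk (g m)).prod))
    obtain ⟨l, hl, rfl⟩ := Submonoid.exists_list_of_mem_closure hx
    exact hlist l hl
  -- R is spanned over K by images of monomials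
  have hmksurj : Function.Surjective mk := Ideal.Quotient.mk_surjective
  have hRspan : Submodule.span K (Set.range fun d : Fin n →₀ ℕ => mk ((monomial d) (1:K))) = ⊤ := by
    have h1 : Submodule.span K (Set.range (MvPolynomial.basisMonomials (Fin n) K)) = ⊤ :=
      (MvPolynomial.basisMonomials (Fin n) K).span_eq
    have h2 : Submodule.span K (⇑mk '' Set.range ⇑(MvPolynomial.basisMonomials (Fin n) K)) = ⊤ := by
      have h2' : Submodule.map mk.toLinearMap (Submodule.span K
          (Set.range ⇑(MvPolynomial.basisMonomials (Fin n) K))) = ⊤ := by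
        rw [h1, Submodule.map_top]
        exact LinearMap.range_eq_top.mpr hmksurj
      rw [Submodule.map_span] at h2'
      simpa only [show ⇑mk.toLinearMap = ⇑mk from rfl] using h2'
    have h3 : (⇑mk '' Set.range ⇑(MvPolynomial.basisMonomials (Fin n) K)) =
        Set.range fun d : Fin n →₀ ℕ => mk ((monomial d) (1:K)) := by
      rw [← Set.range_comp, MvPolynomial.coe_basisMonomials]
      rfl
    rw [← h3]
    exact h2
  -- spanning set of A
  let E : Set A := Set.range (fun p : (Fin n →₀ ℕ) × S =>
    algebraMap R A (mk ((monomial p.1) (1:K))) * IsLocalization.mk' A (1:R) p.2)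
  haveI : Countable S := hScount.to_subtype
  have hEcount : E.Countable := Set.countable_range _
  have hEspan : Submodule.span K E = ⊤ := by
    rw [Submodule.eq_top_iff']
    intro x
    obtain ⟨⟨r, s⟩, rfl⟩ := IsLocalization.mk'_surjective S x
    show IsLocalization.mk' A r s ∈ Submodule.span K E
    rw [IsLocalization.mk'_eq_mul_mk'_one]
    let ψ : R →ₗ[K] A := (LinearMap.mulRight K (IsLocalization.mk' A (1:R) s)).comp
      ((IsScalarTower.toAlgHom K R A).toLinearMap)
    have hr : r ∈ Submodule.span K (Set.range fun d : Fin n →₀ ℕ => mk ((monomial d) (1:K))) := by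
      rw [hRspan]; trivial
    have := Submodule.mem_map_of_mem (f := ψ) hr
    rw [Submodule.map_span] at this
    refine Submodule.span_mono ?_ this
    rintro _ ⟨_, ⟨d, rfl⟩, rfl⟩
    exact ⟨(d, s), rfl⟩
  have hrankA : Module.rank K A ≤ Cardinal.aleph0 := by
    have h1 : Module.rank K A = Module.rank K (⊤ : Submodule K A) := (rank_top K A).symm
    rw [h1, ← hEspan]
    exact (rank_span_le E).trans hEcount.le_aleph0
  -- a maximal ideal
  obtain ⟨mI, hmI⟩ := Ideal.exists_maximal A
  haveI := hmI
  haveI : mI.IsTwoSided := ⟨fun b ha => mul_comm b _ ▸ mI.smul_mem _ ha⟩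
  let L := A ⧸ mI
  letI : Field L := @Ideal.Quotient.field A _ mI hmI
  have hrankL : Module.rank K L ≤ Cardinal.aleph0 := by
    refine le_trans (LinearMap.rank_le_of_surjective (Ideal.Quotient.mkₐ K mI).toLinearMap
      Ideal.Quotient.mk_surjective) hrankA
  haveI : Algebra.IsAlgebraic K L := alg_of_small_rank hrankL
  haveI : Algebra.IsIntegral K L := Algebra.IsAlgebraic.isIntegral
  have hsurj : Function.Surjective (algebraMap K L) :=
    IsAlgClosed.algebraMap_bijective_of_isIntegral.2
  let Φ : MvPolynomial (Fin n) K →ₐ[K] L :=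
    (Ideal.Quotient.mkₐ K mI).comp ((IsScalarTower.toAlgHom K R A).comp mk)
  let q : Fin n → K := fun i => (hsurj (Φ (X i))).choose
  have hq : ∀ i, algebraMap K L (q i) = Φ (X i) := fun i => (hsurj (Φ (X i))).choose_spec
  have key : ∀ f, algebraMap K L (MvPolynomial.eval q f) = Φ f := by
    have : (algebraMap K L).comp (MvPolynomial.eval q) = Φ.toRingHom := by
      apply MvPolynomial.ringHom_ext
      · intro a
        simp only [RingHom.comp_apply, MvPolynomial.eval_C]
        rw [show (C a : MvPolynomial (Fin n) K) = algebraMap K _ a from rfl]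
        rw [AlgHom.toRingHom_eq_coe, RingHom.coe_coe, AlgHom.commutes]
      · intro i
        simpa using hq i
    intro f
    exact congrFun (congrArg (fun h => h.toFun) this) f
  have hinj : Function.Injective (algebraMap K L) := (algebraMap K L).injective
  refine ⟨q, ?_, ?_⟩
  · intro f hf
    apply hinj
    rw [MvPolynomial.aeval_eq_eval, key f, map_zero]
    have : mk f = 0 := Ideal.Quotient.eq_zero_iff_mem.mpr hf
    show Ideal.Quotient.mk mI (algebraMap R A (mk f)) = 0
    rw [this, map_zero, map_zero]
  · intro m hm
    have h0 : Φ (g m) = 0 := by rw [← key, hm, map_zero]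
    have hu : IsUnit (algebraMap R A (mk (g m))) :=
      IsLocalization.map_units (M := S) A ⟨mk (g m), Submonoid.subset_closure ⟨m, rfl⟩⟩
    have : algebraMap R A (mk (g m)) ∈ mI := Ideal.Quotient.eq_zero_iff_mem.mp h0
    exact hmI.ne_top (Ideal.eq_top_of_isUnit_mem mI this hu)

/-! #### The Zariski topology on affine space -/

section Zariski

variable {K : Type*} [Field K] {n : ℕ}

lemma zeroLocus_inf (I J : Ideal (MvPolynomial (Fin n) K)) :
    MvPolynomial.zeroLocus K (I ⊓ J) = MvPolynomial.zeroLocus K I ∪ MvPolynomial.zeroLocus K J := by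
  apply subset_antisymm
  · intro x hx
    by_contra hc
    rw [Set.mem_union] at hc
    push_neg at hc
    obtain ⟨hc1, hc2⟩ := hc
    rw [MvPolynomial.mem_zeroLocus_iff] at hc1 hc2
    push_neg at hc1 hc2
    obtain ⟨f, hfI, hf⟩ := hc1
    obtain ⟨g, hgJ, hg⟩ := hc2
    have hmem : f * g ∈ I ⊓ J := ⟨Ideal.mul_mem_right g I hfI, Ideal.mul_mem_left J f hgJ⟩
    have := hx _ hmem
    rw [map_mul] at this
    exact mul_ne_zero hf hg this
  · exact Set.union_subset (MvPolynomial.zeroLocus_anti_mono inf_le_left)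
      (MvPolynomial.zeroLocus_anti_mono inf_le_right)

lemma zeroLocus_iSup {ι : Sort*} (I : ι → Ideal (MvPolynomial (Fin n) K)) :
    MvPolynomial.zeroLocus K (⨆ i, I i) = ⋂ i, MvPolynomial.zeroLocus K (I i) := by
  apply subset_antisymm
  · exact Set.subset_iInter fun i => MvPolynomial.zeroLocus_anti_mono (le_iSup I i)
  · have h1 : (⨆ i, I i) ≤ MvPolynomial.vanishingIdeal K (⋂ i, MvPolynomial.zeroLocus K (I i)) :=
      iSup_le fun i => le_trans (MvPolynomial.le_vanishingIdeal_zeroLocus (I i))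
        (MvPolynomial.vanishingIdeal_anti_mono (Set.iInter_subset _ i))
    exact fun x hx => MvPolynomial.zeroLocus_anti_mono h1
      (MvPolynomial.zeroLocus_vanishingIdeal_le _ hx)

lemma isOpen_iff {U : Set (Fin n → K)} :
    IsOpen U ↔ ∃ I : Ideal (MvPolynomial (Fin n) K), U = (MvPolynomial.zeroLocus K I)ᶜ := by
  constructor
  · intro h
    have h' : TopologicalSpace.GenerateOpen
        {U | ∃ I : Ideal (MvPolynomial (Fin n) K), U = (MvPolynomial.zeroLocus K I)ᶜ} U := h
    clear h
    induction h' with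
    | basic V hV => exact hV
    | univ => exact ⟨⊤, by rw [MvPolynomial.zeroLocus_top]; simp⟩
    | inter V W hV hW ihV ihW =>
      obtain ⟨I, rfl⟩ := ihV
      obtain ⟨J, rfl⟩ := ihW
      exact ⟨I ⊓ J, by rw [zeroLocus_inf, Set.compl_union]⟩
    | sUnion Ss h ih =>
      choose I hI using fun p : {s // s ∈ Ss} => ih p.1 p.2
      refine ⟨⨆ p : {s // s ∈ Ss}, I p, ?_⟩
      rw [zeroLocus_iSup, Set.compl_iInter, Set.sUnion_eq_iUnion]
      exact Set.iUnion_congr fun p => hI p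
  · rintro ⟨I, rfl⟩
    exact TopologicalSpace.isOpen_generateFrom_of_mem ⟨I, rfl⟩

lemma isClosed_iff {C : Set (Fin n → K)} :
    IsClosed C ↔ ∃ I : Ideal (MvPolynomial (Fin n) K), C = MvPolynomial.zeroLocus K I := by
  rw [← isOpen_compl_iff, isOpen_iff]
  constructor
  · rintro ⟨I, hI⟩
    exact ⟨I, by rw [← compl_compl C, hI, compl_compl]⟩
  · rintro ⟨I, rfl⟩
    exact ⟨I, rfl⟩

lemma closed_eq {C : Set (Fin n → K)} (hC : IsClosed C) :
    C = MvPolynomial.zeroLocus K (MvPolynomial.vanishingIdeal K C) := by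
  obtain ⟨I, rfl⟩ := isClosed_iff.mp hC
  apply subset_antisymm (MvPolynomial.zeroLocus_vanishingIdeal_le _)
  exact MvPolynomial.zeroLocus_anti_mono (MvPolynomial.le_vanishingIdeal_zeroLocus I)

lemma exists_min (F : Set (Set (Fin n → K))) (hne : F.Nonempty) (hcl : ∀ Y ∈ F, IsClosed Y) :
    ∃ Y ∈ F, ∀ Y' ∈ F, Y' ⊆ Y → Y' = Y := by
  haveI : IsNoetherian (MvPolynomial (Fin n) K) (MvPolynomial (Fin n) K) :=
    isNoetherianRing_iff.mp inferInstance
  obtain ⟨J, hJ, hmax⟩ := (set_has_maximal_iff_noetherian.mpr inferInstance)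
    (MvPolynomial.vanishingIdeal K '' F) (hne.image _)
  obtain ⟨Y, hYF, rfl⟩ := hJ
  refine ⟨Y, hYF, fun Y' hY' hsub => ?_⟩
  have h1 : MvPolynomial.vanishingIdeal K Y ≤ MvPolynomial.vanishingIdeal K Y' :=
    MvPolynomial.vanishingIdeal_anti_mono hsub
  have h2 := hmax _ (Set.mem_image_of_mem _ hY')
  have h3 : MvPolynomial.vanishingIdeal K Y = MvPolynomial.vanishingIdeal K Y' :=
    h1.lt_or_eq.resolve_left h2
  rw [closed_eq (hcl Y' hY'), closed_eq (hcl Y hYF), h3]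

lemma mem_zeroLocus_span_singleton {x : Fin n → K} {f : MvPolynomial (Fin n) K} :
    x ∈ MvPolynomial.zeroLocus K (Ideal.span {f}) ↔ MvPolynomial.eval x f = 0 := by
  constructor
  · exact fun h => h f (Ideal.subset_span rfl)
  · intro h p hp
    obtain ⟨c, rfl⟩ := Ideal.mem_span_singleton'.mp hp
    rw [map_mul, MvPolynomial.aeval_eq_eval, h, mul_zero]

end Zariski

/-! #### The main argument in affine space -/

section Main

variable {K : Type u} [Field K] [IsAlgClosed K] [Uncountable K] {n : ℕ}

/-- A closed set with prime vanishing ideal covered by finitely many closed sets lies in one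
of them. -/
lemma irred_sub {Y : Set (Fin n → K)} (hY : (MvPolynomial.vanishingIdeal K Y).IsPrime)
    {r : ℕ} (C : Fin r → Set (Fin n → K)) (hC : ∀ i, IsClosed (C i))
    (hcov : Y ⊆ ⋃ i, C i) : ∃ i, Y ⊆ C i := by
  by_contra hc
  push_neg at hc
  have hpt : ∀ i, ∃ h : MvPolynomial (Fin n) K,
      h ∈ MvPolynomial.vanishingIdeal K (C i) ∧ h ∉ MvPolynomial.vanishingIdeal K Y := by
    intro i
    obtain ⟨p, hpY, hpC⟩ := Set.not_subset.mp (hc i)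
    have hp2 : p ∉ MvPolynomial.zeroLocus K (MvPolynomial.vanishingIdeal K (C i)) := by
      rw [← closed_eq (hC i)]; exact hpC
    rw [MvPolynomial.mem_zeroLocus_iff] at hp2
    push_neg at hp2
    obtain ⟨h, hh1, hh2⟩ := hp2
    exact ⟨h, hh1, fun hcon => hh2 (hcon p hpY)⟩
  choose h hh1 hh2 using hpt
  have hprod : (∏ i, h i) ∉ MvPolynomial.vanishingIdeal K Y := by
    rw [Ideal.IsPrime.prod_mem_iff]
    rintro ⟨i, _, hi⟩
    exact hh2 i hi
  rw [MvPolynomial.mem_vanishingIdeal_iff] at hprod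
  push_neg at hprod
  obtain ⟨q, hqY, hq⟩ := hprod
  obtain ⟨_, ⟨i, rfl⟩, hqC⟩ := hcov hqY
  rw [map_prod] at hq
  exact (Finset.prod_ne_zero_iff.mp hq i (Finset.mem_univ i)) (hh1 i q hqC)

/-- Over an uncountable algebraically closed field, a decreasing sequence of nonempty
constructible subsets of affine space has nonempty intersection. -/
theorem main_ambient (T : ℕ → Set (Fin n → K)) (hcon : ∀ m, IsConstructibleSet (T m))
    (hdec : Antitone T) (hne : ∀ m, (T m).Nonempty) : (⋂ m, T m).Nonempty := by
  classical
  set F : Set (Set (Fin n → K)) := {Y | IsClosed Y ∧ ∀ m, (Y ∩ T m).Nonempty} with hF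
  have hFne : F.Nonempty := ⟨Set.univ, isClosed_univ, fun m => by simpa using hne m⟩
  obtain ⟨Y, hYF, hmin⟩ := exists_min F hFne (fun Y hY => hY.1)
  obtain ⟨hYc, hYT⟩ := hYF
  obtain ⟨p0, hp0Y, hp0T⟩ := hYT 0
  -- minimality in usable form
  have min' : ∀ Y' : Set (Fin n → K), IsClosed Y' → Y' ⊆ Y →
      (∀ m, (Y' ∩ T m).Nonempty) → Y' = Y := fun Y' h1 h2 h3 => hmin Y' ⟨h1, h3⟩ h2
  -- the vanishing ideal of Y is prime
  have hprime : (MvPolynomial.vanishingIdeal K Y).IsPrime := by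
    constructor
    · rw [Ideal.ne_top_iff_one]
      intro h1
      have := h1 p0 hp0Y
      simp at this
    · intro f g hfg
      by_contra hcon'
      push_neg at hcon'
      obtain ⟨hf, hg⟩ := hcon'
      have step : ∀ h : MvPolynomial (Fin n) K, h ∉ MvPolynomial.vanishingIdeal K Y →
          ∃ m, Y ∩ MvPolynomial.zeroLocus K (Ideal.span {h}) ∩ T m = ∅ := by
        intro h hh
        by_contra hcc
        push_neg at hcc
        have hcl : IsClosed (Y ∩ MvPolynomial.zeroLocus K (Ideal.span {h})) :=
          IsClosed.inter hYc (isClosed_iff.mpr ⟨_, rfl⟩)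
        have heq := min' _ hcl Set.inter_subset_left (fun m => hcc m)
        rw [MvPolynomial.mem_vanishingIdeal_iff] at hh
        push_neg at hh
        obtain ⟨x, hxY, hx⟩ := hh
        have : x ∈ Y ∩ MvPolynomial.zeroLocus K (Ideal.span {h}) := by rw [heq]; exact hxY
        exact hx (mem_zeroLocus_span_singleton.mp this.2)
      obtain ⟨m1, hm1⟩ := step f hf
      obtain ⟨m2, hm2⟩ := step g hg
      obtain ⟨p, hpY, hpT⟩ := hYT (max m1 m2)
      have hf0 : MvPolynomial.eval p f ≠ 0 := by
        intro h0
        have : p ∈ Y ∩ MvPolynomial.zeroLocus K (Ideal.span {f}) ∩ T m1 :=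
          ⟨⟨hpY, mem_zeroLocus_span_singleton.mpr h0⟩, hdec (le_max_left m1 m2) hpT⟩
        rw [hm1] at this
        exact this
      have hg0 : MvPolynomial.eval p g ≠ 0 := by
        intro h0
        have : p ∈ Y ∩ MvPolynomial.zeroLocus K (Ideal.span {g}) ∩ T m2 :=
          ⟨⟨hpY, mem_zeroLocus_span_singleton.mpr h0⟩, hdec (le_max_right m1 m2) hpT⟩
        rw [hm2] at this
        exact this
      have := hfg p hpY
      rw [map_mul] at this
      exact mul_ne_zero hf0 hg0 this
  -- Y ∩ T m is dense in Y
  have hdense : ∀ m, Y ⊆ closure (Y ∩ T m) := by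
    intro m
    have h1 : IsClosed (closure (Y ∩ T m)) := isClosed_closure
    have h2 : closure (Y ∩ T m) ⊆ Y := closure_minimal Set.inter_subset_left hYc
    have h3 : ∀ k, (closure (Y ∩ T m) ∩ T k).Nonempty := by
      intro k
      obtain ⟨p, hpY, hpT⟩ := hYT (max m k)
      exact ⟨p, subset_closure ⟨hpY, hdec (le_max_left m k) hpT⟩,
        hdec (le_max_right m k) hpT⟩
    exact (min' _ h1 h2 h3).symm.subset
  -- choose good open sets
  have hsel : ∀ m, ∃ O : Set (Fin n → K), IsOpen O ∧ (Y ∩ O).Nonempty ∧ Y ∩ O ⊆ T m := by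
    intro m
    obtain ⟨r, f, hlc, hTm⟩ := hcon m
    choose U Z hU hZ hUZ using hlc
    have hcup : Y ⊆ ⋃ i, closure (Y ∩ f i) := by
      have hclosed : IsClosed (⋃ i, closure (Y ∩ f i)) :=
        isClosed_iUnion_of_finite fun i => isClosed_closure
      refine (hdense m).trans (closure_minimal ?_ hclosed)
      rintro x ⟨hxY, hxT⟩
      rw [hTm] at hxT
      obtain ⟨_, ⟨i, rfl⟩, hxi⟩ := hxT
      exact Set.mem_iUnion.mpr ⟨i, subset_closure ⟨hxY, hxi⟩⟩
    obtain ⟨i, hi⟩ := irred_sub hprime _ (fun i => isClosed_closure) hcup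
    refine ⟨U i, hU i, ?_, ?_⟩
    · have hfne : (Y ∩ f i).Nonempty := by
        rcases Set.eq_empty_or_nonempty (Y ∩ f i) with he | hne'
        · rw [he, closure_empty] at hi
          exact absurd (hi hp0Y) (Set.notMem_empty _)
        · exact hne'
      obtain ⟨x, hxY, hxf⟩ := hfne
      have : x ∈ U i := by rw [hUZ i] at hxf; exact hxf.1
      exact ⟨x, hxY, this⟩
    · rintro x ⟨hxY, hxU⟩
      have hxZ : x ∈ Z i := by
        have h1 : closure (Y ∩ f i) ⊆ Z i :=
          closure_minimal (by rw [hUZ i]; exact fun y hy => hy.2.2) (hZ i)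
        exact h1 (hi hxY)
      rw [hTm]
      exact Set.mem_iUnion.mpr ⟨i, by rw [hUZ i]; exact ⟨hxU, hxZ⟩⟩
  choose O hOopen hOne hOsub using hsel
  -- choose polynomials
  have hgsel : ∀ m, ∃ g : MvPolynomial (Fin n) K,
      g ∉ MvPolynomial.vanishingIdeal K Y ∧ ∀ x, MvPolynomial.eval x g ≠ 0 → x ∈ O m := by
    intro m
    obtain ⟨J, hJ⟩ := isOpen_iff.mp (hOopen m)
    obtain ⟨p, hpY, hpO⟩ := hOne m
    have hpz : p ∉ MvPolynomial.zeroLocus K J := by rw [hJ] at hpO; exact hpO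
    rw [MvPolynomial.mem_zeroLocus_iff] at hpz
    push_neg at hpz
    obtain ⟨g, hgJ, hgp⟩ := hpz
    refine ⟨g, ?_, ?_⟩
    · rw [MvPolynomial.mem_vanishingIdeal_iff]
      push_neg
      exact ⟨p, hpY, hgp⟩
    · intro x hx
      rw [hJ]
      intro hc
      exact hx (hc g hgJ)
  choose g hg1 hg2 using hgsel
  obtain ⟨q, hqz, hqg⟩ := key_point K n (MvPolynomial.vanishingIdeal K Y) hprime g hg1
  have hqY : q ∈ Y := by rw [closed_eq hYc]; exact hqz
  exact ⟨q, Set.mem_iInter.mpr fun m => hOsub m ⟨hqY, hg2 m q (hqg m)⟩⟩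

end Main

end ConstructibleChainAux

/-- Over an uncountable algebraically closed field `K`, for an (affine) variety
`A` (a Zariski closed subset of affine `n`-space, with the induced topology):
a decreasing sequence of constructible subsets of `A` with empty intersection
is eventually empty; equivalently, an increasing sequence of constructible
subsets covering `A` eventually equals `A`. -/
theorem constructible_chain_stabilizes
    (K : Type*) [Field K] [IsAlgClosed K] [Uncountable K]
    (n : ℕ) (A : Set (Fin n → K)) (hA : IsClosed A) :
    (∀ T : ℕ → Set A, (∀ m, IsConstructibleSet (T m)) → Antitone T →
      (⋂ m, T m) = ∅ → ∃ N, T N = ∅) ∧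
    (∀ Z : ℕ → Set A, (∀ m, IsConstructibleSet (Z m)) → Monotone Z →
      (⋃ m, Z m) = Set.univ → ∃ N, Z N = Set.univ) := by
  classical
  have himg : ∀ s : Set A, IsConstructibleSet s →
      IsConstructibleSet (Subtype.val '' s : Set (Fin n → K)) := by
    rintro s ⟨m, f, hf, rfl⟩
    rw [Set.image_iUnion]
    exact ⟨m, _, fun i => (hf i).image Topology.IsInducing.subtypeVal
      (by rw [Subtype.range_val]; exact hA.isLocallyClosed), rfl⟩
  have part1 : ∀ T : ℕ → Set A, (∀ m, IsConstructibleSet (T m)) → Antitone T →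
      (⋂ m, T m) = ∅ → ∃ N, T N = ∅ := by
    intro T hT hanti hempty
    by_contra hc
    push_neg at hc
    have hne : ∀ m, (T m).Nonempty := hc
    obtain ⟨q, hq⟩ := ConstructibleChainAux.main_ambient
      (fun m => (Subtype.val '' T m : Set (Fin n → K)))
      (fun m => himg _ (hT m))
      (fun a b hab => Set.image_mono (hanti hab))
      (fun m => (hne m).image _)
    rw [Set.mem_iInter] at hq
    obtain ⟨x0, hx0, hx0e⟩ := hq 0
    have hx : ∀ m, x0 ∈ T m := by
      intro m
      obtain ⟨y, hy, hye⟩ := hq m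
      rwa [show y = x0 from Subtype.val_injective (hye.trans hx0e.symm)] at hy
    have : x0 ∈ ⋂ m, T m := Set.mem_iInter.mpr hx
    rw [hempty] at this
    exact this
  refine ⟨part1, ?_⟩
  intro Z hZ hmono hunion
  obtain ⟨N, hN⟩ := part1 (fun m => (Z m)ᶜ)
    (fun m => ConstructibleChainAux.constructible_compl (hZ m))
    (fun a b hab => Set.compl_subset_compl.mpr (hmono hab))
    (by rw [← Set.compl_iUnion, hunion, Set.compl_univ])
  exact ⟨N, by rw [← compl_compl (Z N), hN, Set.compl_empty]⟩
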